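/- Let X be a finite set, P and Q probability distributions on X with full support, ρ > 0, α = 1/(1+ρ), and Z_Q = ∑_{x} Q(x)^α. Suppose ψ : X → (0,∞) satisfies ψ(x) ≤ c · Z_Q / Q(x)^α for all x, for some c > 0. Then ∑_x P(x) ψ(x)^ρ ≤ 2^{ρ·(H_α(P) + I_α(P,Q) + log c)}, where H_α(P) = (1/(1-α)) log ∑_x P(x)^α and I_α(P,Q) = (α/(1-α)) log( ∑_x P(x) · [∑_{x'} (Q(x')/Q(x))^α]^{(1-α)/α} ) − H_α(P). -/

import Mathlib

open Real Finset

theorem stmt3 {X : Type*} [Fintype X]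
    (P Q : X → ℝ) (hP : ∀ x, 0 < P x) (hPsum : ∑ x, P x = 1)
    (hQ : ∀ x, 0 < Q x) (hQsum : ∑ x, Q x = 1)
    (ρ : ℝ) (hρ : 0 < ρ) (α : ℝ) (hα : α = 1 / (1 + ρ))
    (ZQ : ℝ) (hZQ : ZQ = ∑ x, Q x ^ α)
    (ψ : X → ℝ) (hψpos : ∀ x, 0 < ψ x)
    (c : ℝ) (hc : 0 < c) (hψ : ∀ x, ψ x ≤ c * ZQ / Q x ^ α) :
    ∑ x, P x * ψ x ^ ρ ≤
      (2 : ℝ) ^ (ρ * ((1 / (1 - α)) * Real.logb 2 (∑ x, P x ^ α)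
        + ((α / (1 - α)) * Real.logb 2
            (∑ x, P x * (∑ x', (Q x' / Q x) ^ α) ^ ((1 - α) / α))
          - (1 / (1 - α)) * Real.logb 2 (∑ x, P x ^ α))
        + Real.logb 2 c)) := by
  have h1ρ : (0:ℝ) < 1 + ρ := by linarith
  have hαpos : 0 < α := by rw [hα]; positivity
  have hαρ : (1 - α) / α = ρ := by
    rw [hα]; field_simp; ring
  have hinv : α / (1 - α) = 1 / ρ := by
    rw [hα]; field_simp; rw [add_sub_cancel_left]; exact div_self hρ.ne'
  have hne : (Finset.univ : Finset X).Nonempty := by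
    rcases (Finset.univ : Finset X).eq_empty_or_nonempty with h | h
    · rw [h] at hPsum; simp at hPsum
    · exact h
  have hZQpos : 0 < ZQ := by
    rw [hZQ]
    exact Finset.sum_pos (fun x _ => Real.rpow_pos_of_pos (hQ x) α) hne
  have hQα : ∀ x, 0 < Q x ^ α := fun x => Real.rpow_pos_of_pos (hQ x) α
  have hsum : ∀ x, (∑ x', (Q x' / Q x) ^ α) = ZQ / Q x ^ α := by
    intro x
    rw [hZQ, Finset.sum_div]
    refine Finset.sum_congr rfl fun x' _ => ?_
    rw [Real.div_rpow (hQ x').le (hQ x).le]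
  set S : ℝ := ∑ x, P x * (ZQ / Q x ^ α) ^ ρ with hS
  have hSpos : 0 < S := by
    refine Finset.sum_pos (fun x _ => ?_) hne
    exact mul_pos (hP x) (Real.rpow_pos_of_pos (div_pos hZQpos (hQα x)) ρ)
  have hrw : (∑ x, P x * (∑ x', (Q x' / Q x) ^ α) ^ ((1 - α) / α)) = S := by
    refine Finset.sum_congr rfl fun x _ => ?_
    rw [hsum x, hαρ]
  have hexp : ρ * ((1 / (1 - α)) * Real.logb 2 (∑ x, P x ^ α)
        + ((α / (1 - α)) * Real.logb 2
            (∑ x, P x * (∑ x', (Q x' / Q x) ^ α) ^ ((1 - α) / α))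
          - (1 / (1 - α)) * Real.logb 2 (∑ x, P x ^ α))
        + Real.logb 2 c) = Real.logb 2 S + Real.logb 2 c * ρ := by
    rw [hrw, hinv]
    field_simp
    ring
  rw [hexp, Real.rpow_add two_pos, Real.rpow_logb two_pos (by norm_num) hSpos,
    Real.rpow_mul (by norm_num : (0:ℝ) ≤ 2),
    Real.rpow_logb two_pos (by norm_num) hc]
  calc ∑ x, P x * ψ x ^ ρ
      ≤ ∑ x, P x * (c ^ ρ * (ZQ / Q x ^ α) ^ ρ) := by
        refine Finset.sum_le_sum fun x _ => ?_
        have : ψ x ^ ρ ≤ (c * (ZQ / Q x ^ α)) ^ ρ := by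
          apply Real.rpow_le_rpow (hψpos x).le _ hρ.le
          rw [← mul_div_assoc]; exact hψ x
        rw [Real.mul_rpow hc.le (div_pos hZQpos (hQα x)).le] at this
        exact mul_le_mul_of_nonneg_left this (hP x).le
    _ = S * c ^ ρ := by
        rw [hS, Finset.sum_mul]
        refine Finset.sum_congr rfl fun x _ => ?_
        ring
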